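/- Let p be a prime and let K be a finite field of characteristic p. Let F be a finite-dimensional K-vector space with a fixed basis, giving dot products on F and on V := F ⊕ F (where (a,b)·(x,y) := a·x + b·y). Let * : F × F → F satisfy: (i) a*(x + y) = a*x + a*y for all a, x, y ∈ F; (ii) for all a ≠ b in F, the map z ↦ a*z − b*z is a bijection of F; (iii) m*(k·x) = k·(m*x) for all m, x ∈ F, k ∈ K. Let T : K → 𝔽_p be a nonzero 𝔽_p-linear functional, and let ζ ∈ ℂ be a primitive p-th root of unity. Let g : F → K be balanced (each value in K taken |F|/|K| times), and define f : V → K by f(0, y) := g(0), and f(x, y) := g(m) for x ≠ 0, where m is the unique element of F with y = m*x. Then for every k ∈ K with k ≠ 0 and every (a, b) ∈ V, the complex number ∑_{(x,y) ∈ V} ζ^{T(a·x + b·y + k·f(x,y))} has absolute value |F| = |V|^{1/2}. -/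

import Mathlib

section helpers
variable {p : ℕ} [Fact p.Prime] {ζ : ℂ}

lemma aux_neZero : NeZero p := ⟨(Fact.out : p.Prime).ne_zero⟩

lemma aux_mul (hζ : IsPrimitiveRoot ζ p) (s t : ZMod p) :
    ζ ^ (s + t).val = ζ ^ s.val * ζ ^ t.val := by
  haveI := aux_neZero (p := p)
  exact (AddChar.zmodChar p hζ.pow_eq_one).map_add_eq_mul s t

lemma aux_abs (hζ : IsPrimitiveRoot ζ p) (t : ZMod p) : ‖ζ ^ t.val‖ = 1 := by
  have h1 : ‖ζ‖ = 1 := by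
    exact Complex.norm_eq_one_of_pow_eq_one hζ.pow_eq_one (Fact.out : p.Prime).ne_zero
  rw [norm_pow, h1, one_pow]

lemma aux_vanish (hζ : IsPrimitiveRoot ζ p) {G : Type*} [AddCommGroup G] [Fintype G]
    (φ : G → ZMod p) (hadd : ∀ x y, φ (x + y) = φ x + φ y)
    (g₀ : G) (h0 : φ g₀ ≠ 0) : ∑ x : G, ζ ^ (φ x).val = 0 := by
  haveI := aux_neZero (p := p)
  set ψ := AddChar.zmodChar p hζ.pow_eq_one with hψ
  have hprim := AddChar.zmodChar_primitive_of_primitive_root p hζ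
  have : ∑ x : G, (ψ.compAddMonoidHom (AddMonoidHom.mk' φ hadd)) x = 0 := by
    rw [AddChar.sum_eq_zero_iff_ne_zero, AddChar.ne_zero_iff]
    refine ⟨g₀, ?_⟩
    exact fun h => h0 ((AddChar.IsPrimitive.zmod_char_eq_one_iff p hprim _).mp h)
  simpa [hψ, AddChar.zmodChar_apply] using this

end helpers

section dot
variable {K : Type*} [Field K] {n : ℕ}

lemma aux_dot_add (u x y : Fin n → K) :
    ∑ i, u i * (x + y) i = ∑ i, u i * x i + ∑ i, u i * y i := by
  simp [mul_add, Finset.sum_add_distrib]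

lemma aux_dot_single (u : Fin n → K) (j : Fin n) :
    ∑ i, u i * (Pi.single j 1 : Fin n → K) i = u j := by
  simp [Pi.single_apply]

lemma aux_single_decomp (x : Fin n → K) :
    x = ∑ j, x j • (Pi.single j 1 : Fin n → K) := by
  ext i
  simp [Pi.single_apply]

lemma aux_dot_smul (u : Fin n → K) (t : K) (w : Fin n → K) :
    ∑ i, u i * (t • w) i = t * ∑ i, u i * w i := by
  rw [Finset.mul_sum]
  exact Finset.sum_congr rfl fun i _ => by simp [smul_eq_mul]; ring

lemma aux_dot_smul_single (u : Fin n → K) (i : Fin n) (t : K) :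
    ∑ j, u j * (t • (Pi.single i 1 : Fin n → K)) j = t * u i := by
  rw [aux_dot_smul, aux_dot_single]

lemma aux_dot_sub (u x y : Fin n → K) :
    ∑ i, u i * (x - y) i = ∑ i, u i * x i - ∑ i, u i * y i := by
  simp [mul_sub, Finset.sum_sub_distrib]

lemma aux_expand (mul : (Fin n → K) → (Fin n → K) → (Fin n → K))
    (hdist : ∀ a x y : Fin n → K, mul a (x + y) = mul a x + mul a y)
    (hker : ∀ (m x : Fin n → K) (k : K), mul m (k • x) = k • mul m x)
    (b m x : Fin n → K) :
    ∑ i, b i * (mul m x) i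
      = ∑ j, x j * ∑ i, b i * (mul m (Pi.single j 1)) i := by
  have hmx : mul m x = ∑ j, x j • mul m (Pi.single j 1) := by
    conv_lhs => rw [aux_single_decomp x]
    have := map_sum (AddMonoidHom.mk' (mul m) (hdist m))
      (fun j => x j • (Pi.single j 1 : Fin n → K)) Finset.univ
    simp only [AddMonoidHom.mk'_apply, hker] at this
    exact this
  rw [hmx]
  simp only [Finset.sum_apply, Pi.smul_apply, smul_eq_mul, Finset.mul_sum]
  rw [Finset.sum_comm]
  refine Finset.sum_congr rfl fun j _ => ?_
  exact Finset.sum_congr rfl fun i _ => by ring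

end dot

section pqf
variable {K : Type*} [Field K] [Fintype K] {n : ℕ}
variable (mul : (Fin n → K) → (Fin n → K) → (Fin n → K))

lemma aux_mul_zero (hdist : ∀ a x y : Fin n → K, mul a (x + y) = mul a x + mul a y)
    (m : Fin n → K) : mul m 0 = 0 := by
  have h := hdist m 0 0
  rw [add_zero] at h
  exact (add_eq_right.mp h.symm)

lemma aux_mulx_bij
    (hdist : ∀ a x y : Fin n → K, mul a (x + y) = mul a x + mul a y)
    (hbij : ∀ a b : Fin n → K, a ≠ b → Function.Bijective (fun z => mul a z - mul b z))
    {x : Fin n → K} (hx : x ≠ 0) : Function.Bijective (fun m => mul m x) := by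
  rw [← Finite.injective_iff_bijective]
  intro m m' h
  by_contra hne
  have hb := hbij m m' hne
  have h2 : (fun z => mul m z - mul m' z) x = (fun z => mul m z - mul m' z) 0 := by
    simp only [h, sub_self, aux_mul_zero mul hdist]
  exact hx (hb.1 h2)

end pqf

section bal
variable {p : ℕ} [Fact p.Prime] {K : Type*} [Field K] [Fintype K] {n : ℕ} {ζ : ℂ}

lemma aux_balanced (hζ : IsPrimitiveRoot ζ p) (T : K →+ ZMod p) (c₀ : K) (hc₀ : T c₀ ≠ 0)
    (g : (Fin n → K) → K)
    (hg : ∀ c : K, Nat.card {m : Fin n → K | g m = c}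
      = Fintype.card (Fin n → K) / Fintype.card K)
    {k : K} (hk : k ≠ 0) :
    ∑ m : Fin n → K, ζ ^ (T (k * g m)).val = 0 := by
  classical
  have hK : ∑ c : K, ζ ^ (T (k * c)).val = 0 := by
    refine aux_vanish hζ (fun c => T (k * c))
      (fun x y => by show T (k * (x + y)) = _; rw [mul_add, map_add])
      (k⁻¹ * c₀) ?_
    show T (k * (k⁻¹ * c₀)) ≠ 0
    rwa [← mul_assoc, mul_inv_cancel₀ hk, one_mul]
  have hfib : ∀ c : K, (Finset.univ.filter (fun m => g m = c)).card
      = Fintype.card (Fin n → K) / Fintype.card K := by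
    intro c
    have := hg c
    rwa [Nat.card_eq_fintype_card, Fintype.card_subtype] at this
  calc ∑ m : Fin n → K, ζ ^ (T (k * g m)).val
      = ∑ c : K, ∑ m ∈ Finset.univ.filter (fun m => g m = c), ζ ^ (T (k * c)).val := by
        exact (Finset.sum_fiberwise' Finset.univ g (fun c => ζ ^ (T (k * c)).val)).symm
    _ = ∑ c : K, (Fintype.card (Fin n → K) / Fintype.card K : ℕ) * ζ ^ (T (k * c)).val := by
        refine Finset.sum_congr rfl fun c _ => ?_
        rw [Finset.sum_const, hfib c, nsmul_eq_mul]
    _ = (Fintype.card (Fin n → K) / Fintype.card K : ℕ) * ∑ c : K, ζ ^ (T (k * c)).val := by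
        rw [Finset.mul_sum]
    _ = 0 := by rw [hK, mul_zero]

end bal

section phi
variable {K : Type*} [Field K] [Fintype K] {n : ℕ}

lemma aux_phi (mul : (Fin n → K) → (Fin n → K) → (Fin n → K))
    (hdist : ∀ a x y : Fin n → K, mul a (x + y) = mul a x + mul a y)
    (hbij : ∀ a b : Fin n → K, a ≠ b → Function.Bijective (fun z => mul a z - mul b z))
    (hker : ∀ (m x : Fin n → K) (k : K), mul m (k • x) = k • mul m x)
    {b : Fin n → K} (hb : b ≠ 0) (a : Fin n → K) :
    ∃ m₀ : Fin n → K, (∀ j, ∑ i, b i * (mul m₀ (Pi.single j 1)) i = - a j) ∧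
      ∀ m, m ≠ m₀ → ∃ j, ∑ i, b i * (mul m (Pi.single j 1)) i ≠ - a j := by
  classical
  have hinj : Function.Injective
      (fun (m : Fin n → K) => (fun j => ∑ i, b i * (mul m (Pi.single j 1)) i)) := by
    intro m m' h
    by_contra hne
    apply hb
    have hpt : ∀ j, ∑ i, b i * (mul m (Pi.single j 1)) i
        = ∑ i, b i * (mul m' (Pi.single j 1)) i := fun j => congrFun h j
    ext j
    obtain ⟨z, hz⟩ := (hbij m m' hne).2 (Pi.single j 1)
    simp only at hz
    have e1 : ∑ i, b i * (mul m z - mul m' z) i = b j := by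
      rw [hz, aux_dot_single]
    have e2 : ∑ i, b i * (mul m z - mul m' z) i = 0 := by
      rw [aux_dot_sub, aux_expand mul hdist hker b m z, aux_expand mul hdist hker b m' z]
      simp only [hpt, sub_self]
    show b j = 0
    rw [← e1, e2]
  obtain ⟨m₀, hm₀⟩ := (Finite.injective_iff_bijective.mp hinj).2 (fun j => - a j)
  refine ⟨m₀, fun j => congrFun hm₀ j, fun m hm => ?_⟩
  by_contra hcon
  push_neg at hcon
  apply hm
  apply hinj
  funext j
  simp only
  rw [hcon j]
  exact (congrFun hm₀ j).symm

end phi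

set_option maxHeartbeats 2000000 in
/-- Fourier-side computation: with `F = K^n` (dot products from the standard basis),
a prequasifield multiplication `*` whose kernel contains `K`, a nonzero 𝔽_p-linear
functional `T : K → 𝔽_p`, a primitive `p`-th root of unity `ζ`, and a balanced
`g : F → K`, the function `f` with `f (0,y) = g 0` and `f (x, m*x) = g m` satisfies
`|∑_{(x,y)} ζ^{T(a·x + b·y + k f(x,y))}| = |F| = |V|^{1/2}` for all `k ≠ 0`, `(a,b)`. -/
theorem fourier_bent_of_prequasifield {p : ℕ} [Fact p.Prime]
    {K : Type*} [Field K] [Fintype K] [CharP K p] (n : ℕ)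
    (mul : (Fin n → K) → (Fin n → K) → (Fin n → K))
    (hdist : ∀ a x y : Fin n → K, mul a (x + y) = mul a x + mul a y)
    (hbij : ∀ a b : Fin n → K, a ≠ b → Function.Bijective (fun z => mul a z - mul b z))
    (hker : ∀ (m x : Fin n → K) (k : K), mul m (k • x) = k • mul m x)
    (T : K →+ ZMod p) (hT : T ≠ 0)
    (ζ : ℂ) (hζ : IsPrimitiveRoot ζ p)
    (g : (Fin n → K) → K)
    (hg : ∀ c : K, Nat.card {m : Fin n → K | g m = c}
      = Fintype.card (Fin n → K) / Fintype.card K)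
    (f : (Fin n → K) × (Fin n → K) → K)
    (hf0 : ∀ y : Fin n → K, f (0, y) = g 0)
    (hf : ∀ x : Fin n → K, x ≠ 0 → ∀ m : Fin n → K, f (x, mul m x) = g m) :
    ∀ k : K, k ≠ 0 → ∀ a b : Fin n → K,
      ‖(∑ v : (Fin n → K) × (Fin n → K),
          ζ ^ (T (∑ i, a i * v.1 i + ∑ i, b i * v.2 i + k * f v)).val)‖
        = Fintype.card (Fin n → K) ∧
      (Fintype.card (Fin n → K) : ℝ)
        = Real.sqrt (Fintype.card ((Fin n → K) × (Fin n → K))) := by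
  classical
  intro k hk a b
  obtain ⟨c₀, hc₀⟩ : ∃ c, T c ≠ 0 := by
    by_contra hco
    push_neg at hco
    exact hT (by ext c; simpa using hco c)
  set q := Fintype.card (Fin n → K) with hq
  constructor
  swap
  · rw [Fintype.card_prod]
    push_cast
    exact (Real.sqrt_mul_self (by positivity)).symm
  -- main computation
  suffices h : ∃ t : ZMod p, (∑ v : (Fin n → K) × (Fin n → K),
      ζ ^ (T (∑ i, a i * v.1 i + ∑ i, b i * v.2 i + k * f v)).val) = (q : ℂ) * ζ ^ t.val by
    obtain ⟨t, ht⟩ := h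
    rw [ht, norm_mul, aux_abs hζ, mul_one, Complex.norm_natCast]
  have hbal : ∑ m : Fin n → K, ζ ^ (T (k * g m)).val = 0 :=
    aux_balanced hζ T c₀ hc₀ g hg hk
  have hsplit : (∑ v : (Fin n → K) × (Fin n → K),
        ζ ^ (T (∑ i, a i * v.1 i + ∑ i, b i * v.2 i + k * f v)).val)
      = (∑ y : Fin n → K, ζ ^ (T (∑ i, b i * y i)).val) * ζ ^ (T (k * g 0)).val
        + ∑ m : Fin n → K,
            (∑ x ∈ Finset.univ.erase 0,
              ζ ^ (T (∑ i, a i * x i + ∑ i, b i * (mul m x) i)).val)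
              * ζ ^ (T (k * g m)).val := by
    rw [Fintype.sum_prod_type]
    rw [← Finset.add_sum_erase _ _ (Finset.mem_univ (0 : Fin n → K))]
    congr 1
    · rw [Finset.sum_mul]
      refine Finset.sum_congr rfl fun y _ => ?_
      have e1 : T (∑ i, a i * (0 : Fin n → K) i + ∑ i, b i * y i + k * f (0, y))
          = T (∑ i, b i * y i) + T (k * g 0) := by
        rw [hf0, ← map_add]
        congr 1
        simp
      rw [e1, aux_mul hζ]
    · have e2 : ∀ x ∈ Finset.univ.erase (0 : Fin n → K),
          (∑ y : Fin n → K, ζ ^ (T (∑ i, a i * x i + ∑ i, b i * y i + k * f (x, y))).val)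
            = ∑ m : Fin n → K, ζ ^ (T (∑ i, a i * x i + ∑ i, b i * (mul m x) i)).val
                * ζ ^ (T (k * g m)).val := by
        intro x hx
        have hx0 : x ≠ 0 := Finset.ne_of_mem_erase hx
        refine (Fintype.sum_bijective (fun m => mul m x)
          (aux_mulx_bij mul hdist hbij hx0) _ _ fun m => ?_).symm
        show ζ ^ (T (∑ i, a i * x i + ∑ i, b i * (mul m x) i)).val
            * ζ ^ (T (k * g m)).val
          = ζ ^ (T (∑ i, a i * x i + ∑ i, b i * (mul m x) i + k * f (x, mul m x))).val
        rw [hf x hx0 m]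
        conv_rhs => rw [map_add, aux_mul hζ]
      calc (∑ x ∈ Finset.univ.erase (0 : Fin n → K), ∑ y : Fin n → K,
              ζ ^ (T (∑ i, a i * x i + ∑ i, b i * y i + k * f (x, y))).val)
          = ∑ x ∈ Finset.univ.erase (0 : Fin n → K), ∑ m : Fin n → K,
              ζ ^ (T (∑ i, a i * x i + ∑ i, b i * (mul m x) i)).val
                * ζ ^ (T (k * g m)).val := Finset.sum_congr rfl e2
        _ = ∑ m : Fin n → K, ∑ x ∈ Finset.univ.erase (0 : Fin n → K),
              ζ ^ (T (∑ i, a i * x i + ∑ i, b i * (mul m x) i)).val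
                * ζ ^ (T (k * g m)).val := Finset.sum_comm
        _ = _ := by
              refine Finset.sum_congr rfl fun m _ => ?_
              rw [Finset.sum_mul]
  rw [hsplit]
  by_cases hb : b = 0
  · subst hb
    refine ⟨T (k * g 0), ?_⟩
    have htop : (∑ y : Fin n → K, ζ ^ (T (∑ i, (0 : Fin n → K) i * y i)).val) = (q : ℂ) := by
      simp [hq]
    have hrest : ∀ m : Fin n → K,
        (∑ x ∈ Finset.univ.erase (0 : Fin n → K),
          ζ ^ (T (∑ i, a i * x i + ∑ i, (0 : Fin n → K) i * (mul m x) i)).val)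
        = ∑ x ∈ Finset.univ.erase (0 : Fin n → K), ζ ^ (T (∑ i, a i * x i)).val := by
      intro m
      refine Finset.sum_congr rfl fun x _ => ?_
      congr 2
      simp
    rw [htop]
    have : ∑ m : Fin n → K,
        (∑ x ∈ Finset.univ.erase (0 : Fin n → K),
          ζ ^ (T (∑ i, a i * x i + ∑ i, (0 : Fin n → K) i * (mul m x) i)).val)
          * ζ ^ (T (k * g m)).val = 0 := by
      calc ∑ m : Fin n → K, (∑ x ∈ Finset.univ.erase (0 : Fin n → K),
          ζ ^ (T (∑ i, a i * x i + ∑ i, (0 : Fin n → K) i * (mul m x) i)).val)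
          * ζ ^ (T (k * g m)).val
          = (∑ x ∈ Finset.univ.erase (0 : Fin n → K), ζ ^ (T (∑ i, a i * x i)).val)
            * ∑ m : Fin n → K, ζ ^ (T (k * g m)).val := by
              rw [Finset.mul_sum]
              exact Finset.sum_congr rfl fun m _ => by rw [hrest m]
        _ = 0 := by rw [hbal, mul_zero]
    rw [this, add_zero]
  · -- b ≠ 0
    obtain ⟨i₀, hbi⟩ := Function.ne_iff.mp hb
    have hbi0 : b i₀ ≠ 0 := by simpa using hbi
    have htop : (∑ y : Fin n → K, ζ ^ (T (∑ i, b i * y i)).val) = 0 := by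
      have hadd : ∀ x y : Fin n → K, (fun y => T (∑ i, b i * y i)) (x + y)
          = (fun y => T (∑ i, b i * y i)) x + (fun y => T (∑ i, b i * y i)) y := by
        intro x y
        show T (∑ i, b i * (x + y) i) = _
        rw [aux_dot_add, map_add]
      have hw : (fun y => T (∑ i, b i * y i))
          ((c₀ / b i₀) • (Pi.single i₀ 1 : Fin n → K)) ≠ 0 := by
        show T (∑ i, b i * ((c₀ / b i₀) • (Pi.single i₀ 1 : Fin n → K)) i) ≠ 0
        rw [aux_dot_smul_single, div_mul_cancel₀ c₀ hbi0]
        exact hc₀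
      exact aux_vanish (G := Fin n → K) hζ _ hadd _ hw
    obtain ⟨m₀, hm₀, hm'⟩ := aux_phi mul hdist hbij hker hb a
    have hfull : ∀ m : Fin n → K, (∑ x : Fin n → K,
        ζ ^ (T (∑ i, a i * x i + ∑ i, b i * (mul m x) i)).val)
        = if m = m₀ then (q : ℂ) else 0 := by
      intro m
      split_ifs with hm
      · subst hm
        have hz : ∀ x : Fin n → K, (∑ i, a i * x i + ∑ i, b i * (mul m x) i) = 0 := by
          intro x
          rw [aux_expand mul hdist hker b m x]
          simp only [hm₀]
          rw [← Finset.sum_add_distrib]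
          exact Finset.sum_eq_zero fun i _ => by ring
        simp [hz, hq]
      · obtain ⟨j, hj⟩ := hm' m hm
        have hc : a j + (∑ i, b i * (mul m (Pi.single j 1)) i) ≠ 0 :=
          fun h => hj (eq_neg_of_add_eq_zero_right h)
        have hadd : ∀ x y : Fin n → K,
            (fun x => T (∑ i, a i * x i + ∑ i, b i * (mul m x) i)) (x + y)
            = (fun x => T (∑ i, a i * x i + ∑ i, b i * (mul m x) i)) x
              + (fun x => T (∑ i, a i * x i + ∑ i, b i * (mul m x) i)) y := by
          intro x y
          show T (∑ i, a i * (x + y) i + ∑ i, b i * (mul m (x + y)) i) = _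
          rw [← map_add]
          congr 1
          rw [hdist, aux_dot_add a x y, aux_dot_add b (mul m x) (mul m y)]
          ring
        have hw : (fun x => T (∑ i, a i * x i + ∑ i, b i * (mul m x) i))
            ((c₀ / (a j + ∑ i, b i * (mul m (Pi.single j 1)) i))
              • (Pi.single j 1 : Fin n → K)) ≠ 0 := by
          show T (∑ i, a i * ((c₀ / (a j + ∑ i, b i * (mul m (Pi.single j 1)) i))
              • (Pi.single j 1 : Fin n → K)) i
            + ∑ i, b i * (mul m ((c₀ / (a j + ∑ i, b i * (mul m (Pi.single j 1)) i))
              • (Pi.single j 1 : Fin n → K))) i) ≠ 0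
          rw [hker, aux_dot_smul_single, aux_dot_smul, ← mul_add,
            div_mul_cancel₀ c₀ hc]
          exact hc₀
        exact aux_vanish (G := Fin n → K) hζ _ hadd _ hw
    have hE : ∀ m : Fin n → K, (∑ x ∈ Finset.univ.erase (0 : Fin n → K),
        ζ ^ (T (∑ i, a i * x i + ∑ i, b i * (mul m x) i)).val)
        = (if m = m₀ then (q : ℂ) else 0) - 1 := by
      intro m
      have h0 : ζ ^ (T (∑ i, a i * (0 : Fin n → K) i + ∑ i, b i * (mul m 0) i)).val = 1 := by
        rw [aux_mul_zero mul hdist]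
        simp
      have h1 := Finset.add_sum_erase Finset.univ
        (fun x => ζ ^ (T (∑ i, a i * x i + ∑ i, b i * (mul m x) i)).val)
        (Finset.mem_univ (0 : Fin n → K))
      rw [h0, hfull m] at h1
      exact eq_sub_of_add_eq' h1
    refine ⟨T (k * g m₀), ?_⟩
    rw [htop, zero_mul, zero_add]
    calc (∑ m : Fin n → K, (∑ x ∈ Finset.univ.erase (0 : Fin n → K),
            ζ ^ (T (∑ i, a i * x i + ∑ i, b i * (mul m x) i)).val)
            * ζ ^ (T (k * g m)).val)
        = ∑ m : Fin n → K, ((if m = m₀ then (q : ℂ) else 0) - 1) * ζ ^ (T (k * g m)).val :=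
          Finset.sum_congr rfl fun m _ => by rw [hE m]
      _ = (∑ m : Fin n → K, (if m = m₀ then (q : ℂ) else 0) * ζ ^ (T (k * g m)).val)
            - ∑ m : Fin n → K, ζ ^ (T (k * g m)).val := by
          rw [← Finset.sum_sub_distrib]
          exact Finset.sum_congr rfl fun m _ => by ring
      _ = (q : ℂ) * ζ ^ (T (k * g m₀)).val := by
          rw [hbal, sub_zero]
          simp only [ite_mul, zero_mul]
          rw [Finset.sum_ite_eq' Finset.univ m₀ (fun m => (q : ℂ) * ζ ^ (T (k * g m)).val)]
          simp
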